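/- For every integer n, the complete graph K_n contains ⌊n/2⌋ pairwise edge-disjoint spanning trees. -/

import Mathlib

open SimpleGraph

private def zzn (n v : ℕ) : ℕ := if v % 2 = 0 then n - v / 2 else v / 2 + 1

private lemma zzn_le {n v : ℕ} (hv : v < n) : zzn n v ≤ n := by
  unfold zzn; split_ifs <;> omega

private lemma zmod_helper {n a b : ℕ} (h : (a : ZMod n) = (b : ZMod n))
    (ha : a < 2 * n) (hb : b < 2 * n) : a = b ∨ a + n = b ∨ b + n = a := by
  rw [ZMod.natCast_eq_natCast_iff'] at h
  rcases Nat.eq_zero_or_pos n with rfl | hn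
  · omega
  have h1 := Nat.div_add_mod a n
  have h2 := Nat.div_add_mod b n
  have h3 : a / n < 2 := Nat.div_lt_of_lt_mul (by omega)
  have h4 : b / n < 2 := Nat.div_lt_of_lt_mul (by omega)
  have h5 : a % n < n := Nat.mod_lt _ hn
  generalize hqa : a / n = qa at h1 h3
  generalize hqb : b / n = qb at h2 h4
  have h6 : qa = 0 ∨ qa = 1 := by omega
  have h7 : qb = 0 ∨ qb = 1 := by omega
  rcases h6 with h6 | h6 <;> rcases h7 with h7 | h7 <;>
    rw [h6] at h1 <;> rw [h7] at h2 <;> omega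

section

variable (n : ℕ) [NeZero n]

private def sigF (i : ℕ) (v : Fin n) : Fin n :=
  ⟨(((i + zzn n v.val : ℕ) : ZMod n)).val, ZMod.val_lt _⟩

private lemma sigF_inj (i : ℕ) (hi : i < n) : Function.Injective (sigF n i) := by
  intro v w h
  have h' : ((i + zzn n v.val : ℕ) : ZMod n) = ((i + zzn n w.val : ℕ) : ZMod n) :=
    ZMod.val_injective n (congrArg Fin.val h)
  have hn : 0 < n := Nat.pos_of_ne_zero (NeZero.ne n)
  have hv := v.isLt
  have hw := w.isLt
  have hzv := zzn_le hv
  have hzw := zzn_le hw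
  have h2 := zmod_helper h' (by omega) (by omega)
  apply Fin.ext
  unfold zzn at h2
  split_ifs at h2 <;> omega

private noncomputable def sigE (i : ℕ) (hi : i < n) : Fin n ≃ Fin n :=
  Equiv.ofBijective _ (Finite.injective_iff_bijective.mp (sigF_inj n i hi))

private noncomputable def TG (i : ℕ) (hi : i < n) : SimpleGraph (Fin n) :=
  (pathGraph n).map (sigE n i hi).toEmbedding

end

private lemma pathGraph_isTree (m : ℕ) : (pathGraph (m + 1)).IsTree := by
  constructor
  · exact pathGraph_connected m
  · rw [isAcyclic_iff_forall_adj_isBridge]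
    intro v w h
    rw [isBridge_iff_adj_and_forall_walk_mem_edges]
    refine fun p => ?_
    rw [pathGraph_adj] at h
    rcases h with h | h
    · obtain ⟨d, hd, hd1, hd2⟩ := p.exists_boundary_dart {x | x.val ≤ v.val}
        (by simp only [Set.mem_setOf_eq]; omega) (by simp only [Set.mem_setOf_eq]; omega)
      have hadj := d.adj
      rw [pathGraph_adj] at hadj
      simp only [Set.mem_setOf_eq] at hd1 hd2
      have h1 : d.fst = v := by apply Fin.ext; omega
      have h2 : d.snd = w := by apply Fin.ext; omega
      have : s(v, w) = d.edge := by rw [← h1, ← h2]; rfl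
      rw [this]
      exact List.mem_map_of_mem (f := Dart.edge) hd
    · obtain ⟨d, hd, hd1, hd2⟩ := p.reverse.exists_boundary_dart {x | x.val ≤ w.val}
        (by simp only [Set.mem_setOf_eq]; omega) (by simp only [Set.mem_setOf_eq]; omega)
      have hadj := d.adj
      rw [pathGraph_adj] at hadj
      simp only [Set.mem_setOf_eq] at hd1 hd2
      have h1 : d.fst = w := by apply Fin.ext; omega
      have h2 : d.snd = v := by apply Fin.ext; omega
      have : s(v, w) = d.edge := by rw [← h1, ← h2, Sym2.eq_swap]; rfl
      rw [this]
      have : d.edge ∈ p.reverse.edges := List.mem_map_of_mem (f := Dart.edge) hd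
      rwa [Walk.edges_reverse, List.mem_reverse] at this

private lemma isTree_of_iso {V W : Type*} {G : SimpleGraph V} {H : SimpleGraph W}
    (e : G ≃g H) (h : G.IsTree) : H.IsTree := by
  constructor
  · exact e.connected_iff.mp h.1
  · intro v c hc
    exact h.2 (c.map e.symm.toHom) (hc.map e.symm.toEquiv.injective)

set_option maxHeartbeats 1600000 in
/-- For every integer `n`, the complete graph `K_n` contains `⌊n/2⌋` pairwise
edge-disjoint spanning trees (Nash-Williams). -/
theorem stmt1 (n : ℕ) :
    ∃ T : Fin (n / 2) → SimpleGraph (Fin n),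
      (∀ i, (T i).IsTree) ∧
      Pairwise fun i j => Disjoint (T i).edgeSet (T j).edgeSet := by
  by_cases hn : n / 2 = 0
  · exact ⟨fun _ => ⊥, fun i => absurd i.isLt (by omega),
      fun i j _ => absurd i.isLt (by omega)⟩
  · obtain ⟨m, rfl⟩ : ∃ m, n = m + 1 := ⟨n - 1, by omega⟩
    refine ⟨fun i => TG (m + 1) i.val (by have := i.isLt; omega), fun i => ?_, fun i j hij => ?_⟩
    · exact isTree_of_iso (Iso.map (sigE (m + 1) i.val (by have := i.isLt; omega)) (pathGraph (m + 1)))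
        (pathGraph_isTree m)
    · dsimp only
      rw [Set.disjoint_left]
      intro e he hf
      revert he hf
      induction e using Sym2.ind with
      | _ x y =>
        intro he hf
        rw [mem_edgeSet] at he hf
        obtain ⟨-, a, b, hab, ha, hb⟩ := he
        obtain ⟨-, c, d, hcd, hc, hd⟩ := hf
        rw [pathGraph_adj] at hab hcd
        replace ha : sigF (m+1) i.val a = x := ha
        replace hb : sigF (m+1) i.val b = y := hb
        replace hc : sigF (m+1) j.val c = x := hc
        replace hd : sigF (m+1) j.val d = y := hd
        have hij' : i.val ≠ j.val := fun h => hij (Fin.ext h)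
        have hi := i.isLt
        have hj := j.isLt
        have hA := a.isLt
        have hB := b.isLt
        have hC := c.isLt
        have hD := d.isLt
        -- turn the Fin equalities into ZMod equalities then nat trichotomies
        have e1 : ((i.val + zzn (m+1) a.val : ℕ) : ZMod (m+1))
            = ((j.val + zzn (m+1) c.val : ℕ) : ZMod (m+1)) := by
          exact ZMod.val_injective _ (congrArg Fin.val (ha.trans hc.symm))
        have e2 : ((i.val + zzn (m+1) b.val : ℕ) : ZMod (m+1))
            = ((j.val + zzn (m+1) d.val : ℕ) : ZMod (m+1)) := by
          exact ZMod.val_injective _ (congrArg Fin.val (hb.trans hd.symm))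
        clear ha hb hc hd hij
        have hza := zzn_le hA
        have hzb := zzn_le hB
        have hzc := zzn_le hC
        have hzd := zzn_le hD
        have d1 := zmod_helper e1 (by omega) (by omega)
        have d2 := zmod_helper e2 (by omega) (by omega)
        clear e1 e2
        unfold zzn at d1 d2
        rcases hab with hab | hab <;> rcases hcd with hcd | hcd <;>
          split_ifs at d1 d2 <;> omega
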